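/- arXiv:1705.10528 — 2 statements merged into one kernel-verified Lean document; each statement's English description precedes it below -/
import Mathlib

section
/- For any two policies π' and π, the ℓ¹ divergence between discounted future state distributions is bounded by an average divergence of the policies: ∑_s |d^{π'}(s) - d^π(s)| ≤ (2γ/(1-γ)) E_{s∼d^π}[D_TV(π'‖π)[s]]. -/
open BigOperators Finset Matrix

noncomputable section

variable {S A : Type*}

/-- Policy transition matrix (column-stochastic): entry `(s', s)` is
`P_pol(s'|s) = ∑ a, P(s'|s,a) pol(a|s)`. -/
def Pmat [Fintype A] (P : S → A → S → ℝ) (pol : S → A → ℝ) : Matrix S S ℝ :=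
  fun s' s => ∑ a, P s a s' * pol s a

/-- Discounted future state distribution `d^π = (1-γ) ∑_t γ^t P_π^t μ`. -/
def dFut [Fintype S] [DecidableEq S] [Fintype A] (γ : ℝ) (P : S → A → S → ℝ)
    (μ : S → ℝ) (pol : S → A → ℝ) : S → ℝ :=
  fun s => (1 - γ) * ∑' t : ℕ, γ ^ t * ((Pmat P pol ^ t) *ᵥ μ) s

/-- Discounted return `J(π)` (also used as the cost return `J_C(π)` with a cost `C`
in place of the reward `R`). -/
def Jret [Fintype S] [DecidableEq S] [Fintype A] (γ : ℝ) (P : S → A → S → ℝ)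
    (R : S → A → S → ℝ) (μ : S → ℝ) (pol : S → A → ℝ) : ℝ :=
  (1 / (1 - γ)) * ∑ s, dFut γ P μ pol s * (∑ a, pol s a * (∑ s', P s a s' * R s a s'))

/-- Total variational divergence between action distributions at state `s`. -/
def DTV [Fintype A] (pol' pol : S → A → ℝ) (s : S) : ℝ :=
  (1 / 2) * ∑ a, |pol' s a - pol s a|

/-- Kullback–Leibler divergence between action distributions at state `s`. -/
def DKL [Fintype A] (pol' pol : S → A → ℝ) (s : S) : ℝ :=
  ∑ a, pol' s a * Real.log (pol' s a / pol s a)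

/-- Advantage function `A^π(s,a) = Q^π(s,a) - V^π(s)` built from a value function `V`
(also used for cost advantages with a cost `C` in place of `R`). -/
def Adv [Fintype S] (γ : ℝ) (P : S → A → S → ℝ) (R : S → A → S → ℝ)
    (V : S → ℝ) (s : S) (a : A) : ℝ :=
  (∑ s', P s a s' * (R s a s' + γ * V s')) - V s

/-- `ε_f^{π'} = max_s |E_{a∼π'(·|s), s'∼P}[δ_f(s,a,s')]|` where
`δ_f(s,a,s') = R(s,a,s') + γ f(s') - f(s)`. -/
def epsF [Fintype S] [Fintype A] (γ : ℝ) (P : S → A → S → ℝ) (R : S → A → S → ℝ)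
    (f : S → ℝ) (pol' : S → A → ℝ) : ℝ :=
  ⨆ s, |∑ a, pol' s a * (∑ s', P s a s' * (R s a s' + γ * f s' - f s))|

/-- Surrogate `L_{π,f}(π') = E_{s∼d^π, a∼π, s'∼P}[(π'(a|s)/π(a|s) - 1) δ_f(s,a,s')]`. -/
def Lsurr [Fintype S] [DecidableEq S] [Fintype A] (γ : ℝ) (P : S → A → S → ℝ)
    (R : S → A → S → ℝ) (μ : S → ℝ) (f : S → ℝ) (pol pol' : S → A → ℝ) : ℝ :=
  ∑ s, dFut γ P μ pol s * (∑ a, pol s a * (∑ s', P s a s' *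
    ((pol' s a / pol s a - 1) * (R s a s' + γ * f s' - f s))))


section aux

variable [Fintype S] [DecidableEq S] [Fintype A]

lemma Pmat_nonneg (P : S → A → S → ℝ) (pol : S → A → ℝ)
    (hP0 : ∀ s a s', 0 ≤ P s a s') (hpol0 : ∀ s a, 0 ≤ pol s a) :
    ∀ s' s, 0 ≤ Pmat P pol s' s := fun s' s =>
  Finset.sum_nonneg fun a _ => mul_nonneg (hP0 s a s') (hpol0 s a)

lemma Pmat_colsum (P : S → A → S → ℝ) (pol : S → A → ℝ)
    (hP1 : ∀ s a, (∑ s', P s a s') = 1) (hpol1 : ∀ s, (∑ a, pol s a) = 1) :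
    ∀ s, (∑ s', Pmat P pol s' s) = 1 := by
  intro s
  unfold Pmat
  rw [Finset.sum_comm]
  calc (∑ a, ∑ s', P s a s' * pol s a)
      = ∑ a, pol s a := by
        refine Finset.sum_congr rfl fun a _ => ?_
        rw [← Finset.sum_mul, hP1 s a, one_mul]
    _ = 1 := hpol1 s

lemma pow_mulVec_nonneg (M : Matrix S S ℝ) (hM : ∀ s' s, 0 ≤ M s' s)
    (μ : S → ℝ) (hμ0 : ∀ s, 0 ≤ μ s) : ∀ t s, 0 ≤ ((M ^ t) *ᵥ μ) s := by
  intro t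
  induction t with
  | zero => simpa using hμ0
  | succ n ih =>
      intro s
      rw [pow_succ', ← Matrix.mulVec_mulVec]
      exact Finset.sum_nonneg fun j _ => mul_nonneg (hM s j) (ih j)

lemma pow_mulVec_sum (M : Matrix S S ℝ) (hM : ∀ s, (∑ s', M s' s) = 1)
    (μ : S → ℝ) (hμ1 : (∑ s, μ s) = 1) : ∀ t, (∑ s, ((M ^ t) *ᵥ μ) s) = 1 := by
  intro t
  induction t with
  | zero => simpa using hμ1
  | succ n ih =>
      calc (∑ s, ((M ^ (n+1)) *ᵥ μ) s)
          = ∑ s, ∑ j, M s j * ((M ^ n) *ᵥ μ) j := by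
            refine Finset.sum_congr rfl fun s _ => ?_
            rw [pow_succ', ← Matrix.mulVec_mulVec]
            rfl
        _ = ∑ j, (∑ s, M s j) * ((M ^ n) *ᵥ μ) j := by
            rw [Finset.sum_comm]
            exact Finset.sum_congr rfl fun j _ => (Finset.sum_mul ..).symm
        _ = 1 := by
            simp only [hM, one_mul]; exact ih

lemma dFut_summable (γ : ℝ) (hγ0 : 0 ≤ γ) (hγ1 : γ < 1)
    (M : Matrix S S ℝ) (hM0 : ∀ s' s, 0 ≤ M s' s) (hM1 : ∀ s, (∑ s', M s' s) = 1)
    (μ : S → ℝ) (hμ0 : ∀ s, 0 ≤ μ s) (hμ1 : (∑ s, μ s) = 1) (s : S) :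
    Summable (fun t : ℕ => γ ^ t * ((M ^ t) *ᵥ μ) s) := by
  refine Summable.of_nonneg_of_le (fun t => ?_) (fun t => ?_)
    (summable_geometric_of_lt_one hγ0 hγ1)
  · exact mul_nonneg (pow_nonneg hγ0 t) (pow_mulVec_nonneg M hM0 μ hμ0 t s)
  · have h1 : ((M ^ t) *ᵥ μ) s ≤ 1 := by
      have := pow_mulVec_sum M hM1 μ hμ1 t
      calc ((M ^ t) *ᵥ μ) s ≤ ∑ s', ((M ^ t) *ᵥ μ) s' :=
            Finset.single_le_sum (fun j _ => pow_mulVec_nonneg M hM0 μ hμ0 t j)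
              (Finset.mem_univ s)
        _ = 1 := this
    calc γ ^ t * ((M ^ t) *ᵥ μ) s ≤ γ ^ t * 1 := by
          exact mul_le_mul_of_nonneg_left h1 (pow_nonneg hγ0 t)
      _ = γ ^ t := mul_one _

lemma dFut_fixed (γ : ℝ) (hγ0 : 0 ≤ γ) (hγ1 : γ < 1)
    (P : S → A → S → ℝ) (hP0 : ∀ s a s', 0 ≤ P s a s')
    (hP1 : ∀ s a, (∑ s', P s a s') = 1)
    (μ : S → ℝ) (hμ0 : ∀ s, 0 ≤ μ s) (hμ1 : (∑ s, μ s) = 1)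
    (pol : S → A → ℝ) (hpol0 : ∀ s a, 0 ≤ pol s a) (hpol1 : ∀ s, (∑ a, pol s a) = 1)
    (s : S) :
    dFut γ P μ pol s = (1 - γ) * μ s + γ * ((Pmat P pol) *ᵥ (dFut γ P μ pol)) s := by
  set M := Pmat P pol with hMdef
  have hM0 := Pmat_nonneg P pol hP0 hpol0
  have hM1 := Pmat_colsum P pol hP1 hpol1
  have hsum : ∀ j : S, Summable (fun t : ℕ => γ ^ t * ((M ^ t) *ᵥ μ) j) :=
    fun j => dFut_summable γ hγ0 hγ1 M hM0 hM1 μ hμ0 hμ1 j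
  have key : (∑' t : ℕ, γ ^ t * ((M ^ t) *ᵥ μ) s)
      = μ s + γ * ∑ j, M s j * ∑' t : ℕ, γ ^ t * ((M ^ t) *ᵥ μ) j := by
    rw [Summable.tsum_eq_zero_add (hsum s)]
    congr 1
    · simp
    · have hterm : ∀ t : ℕ, γ ^ (t + 1) * ((M ^ (t + 1)) *ᵥ μ) s
          = ∑ j, γ * (M s j * (γ ^ t * ((M ^ t) *ᵥ μ) j)) := by
        intro t
        rw [pow_succ' M t, ← Matrix.mulVec_mulVec]
        show γ ^ (t+1) * ∑ j, M s j * ((M ^ t) *ᵥ μ) j = _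
        rw [Finset.mul_sum]
        refine Finset.sum_congr rfl fun j _ => ?_
        ring
      calc (∑' t : ℕ, γ ^ (t + 1) * ((M ^ (t + 1)) *ᵥ μ) s)
          = ∑' t : ℕ, ∑ j, γ * (M s j * (γ ^ t * ((M ^ t) *ᵥ μ) j)) := by
            exact tsum_congr hterm
        _ = ∑ j, ∑' t : ℕ, γ * (M s j * (γ ^ t * ((M ^ t) *ᵥ μ) j)) := by
            refine Summable.tsum_finsetSum fun j _ => ?_
            exact ((hsum j).mul_left _).mul_left _
        _ = γ * ∑ j, M s j * ∑' t : ℕ, γ ^ t * ((M ^ t) *ᵥ μ) j := by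
            rw [Finset.mul_sum]
            refine Finset.sum_congr rfl fun j _ => ?_
            rw [tsum_mul_left, tsum_mul_left]
  show (1 - γ) * (∑' t : ℕ, γ ^ t * ((M ^ t) *ᵥ μ) s) = _
  rw [key]
  have : ((M : Matrix S S ℝ) *ᵥ (dFut γ P μ pol)) s
      = ∑ j, M s j * ((1 - γ) * ∑' t : ℕ, γ ^ t * ((M ^ t) *ᵥ μ) j) := rfl
  rw [this]
  have hs : (∑ j, M s j * ((1 - γ) * ∑' t : ℕ, γ ^ t * ((M ^ t) *ᵥ μ) j))
      = (1 - γ) * ∑ j, M s j * ∑' t : ℕ, γ ^ t * ((M ^ t) *ᵥ μ) j := by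
    rw [Finset.mul_sum]
    exact Finset.sum_congr rfl fun j _ => by ring
  rw [hs]
  ring

lemma dFut_nonneg (γ : ℝ) (hγ0 : 0 ≤ γ) (hγ1 : γ < 1)
    (P : S → A → S → ℝ) (hP0 : ∀ s a s', 0 ≤ P s a s')
    (μ : S → ℝ) (hμ0 : ∀ s, 0 ≤ μ s)
    (pol : S → A → ℝ) (hpol0 : ∀ s a, 0 ≤ pol s a) (s : S) :
    0 ≤ dFut γ P μ pol s := by
  have hM0 := Pmat_nonneg P pol hP0 hpol0
  refine mul_nonneg (by linarith) (tsum_nonneg fun t => ?_)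
  exact mul_nonneg (pow_nonneg hγ0 t) (pow_mulVec_nonneg _ hM0 μ hμ0 t s)

end aux

/-- **Lemma 3 of the appendix.** The ℓ¹ divergence between discounted future state
distributions is bounded by an average divergence of the policies:
`‖d^{π'} - d^π‖₁ ≤ (2γ/(1-γ)) E_{s∼d^π}[D_TV(π'‖π)[s]]`. -/
theorem dFut_l1_bound
    [Fintype S] [DecidableEq S] [Nonempty S] [Fintype A] [Nonempty A]
    (γ : ℝ) (hγ0 : 0 ≤ γ) (hγ1 : γ < 1)
    (P : S → A → S → ℝ) (hP0 : ∀ s a s', 0 ≤ P s a s')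
    (hP1 : ∀ s a, (∑ s', P s a s') = 1)
    (μ : S → ℝ) (hμ0 : ∀ s, 0 ≤ μ s) (hμ1 : (∑ s, μ s) = 1)
    (pol pol' : S → A → ℝ)
    (hpol0 : ∀ s a, 0 ≤ pol s a) (hpol1 : ∀ s, (∑ a, pol s a) = 1)
    (hpol'0 : ∀ s a, 0 ≤ pol' s a) (hpol'1 : ∀ s, (∑ a, pol' s a) = 1) :
    (∑ s, |dFut γ P μ pol' s - dFut γ P μ pol s|)
      ≤ (2 * γ / (1 - γ)) * ∑ s, dFut γ P μ pol s * DTV pol' pol s := by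
  set M := Pmat P pol with hMdef
  set M' := Pmat P pol' with hM'def
  set D := dFut γ P μ pol with hDdef
  set D' := dFut γ P μ pol' with hD'def
  have hfix : ∀ s, D s = (1 - γ) * μ s + γ * (M *ᵥ D) s :=
    dFut_fixed γ hγ0 hγ1 P hP0 hP1 μ hμ0 hμ1 pol hpol0 hpol1
  have hfix' : ∀ s, D' s = (1 - γ) * μ s + γ * (M' *ᵥ D') s :=
    dFut_fixed γ hγ0 hγ1 P hP0 hP1 μ hμ0 hμ1 pol' hpol'0 hpol'1
  have hDnn : ∀ s, 0 ≤ D s := dFut_nonneg γ hγ0 hγ1 P hP0 μ hμ0 pol hpol0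
  have hM'0 := Pmat_nonneg P pol' hP0 hpol'0
  have hM'1 := Pmat_colsum P pol' hP1 hpol'1
  -- pointwise decomposition
  have hdelta : ∀ s, D' s - D s
      = γ * ((∑ j, M' s j * (D' j - D j)) + ∑ j, (M' s j - M s j) * D j) := by
    intro s
    rw [hfix s, hfix' s]
    have h1 : (M' *ᵥ D') s = ∑ j, M' s j * D' j := rfl
    have h2 : (M *ᵥ D) s = ∑ j, M s j * D j := rfl
    rw [h1, h2]
    have h3 : (∑ j, M' s j * (D' j - D j)) + ∑ j, (M' s j - M s j) * D j
        = (∑ j, M' s j * D' j) - ∑ j, M s j * D j := by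
      rw [← Finset.sum_add_distrib, ← Finset.sum_sub_distrib]
      exact Finset.sum_congr rfl fun j _ => by ring
    rw [h3]
    ring
  -- bound column l1 differences by 2 * DTV
  have hcol : ∀ j, (∑ s, |M' s j - M s j|) ≤ 2 * DTV pol' pol j := by
    intro j
    have : ∀ s : S, |M' s j - M s j| ≤ ∑ a, P j a s * |pol' j a - pol j a| := by
      intro s
      have : M' s j - M s j = ∑ a, P j a s * (pol' j a - pol j a) := by
        simp only [hM'def, hMdef, Pmat, ← Finset.sum_sub_distrib]
        refine Finset.sum_congr rfl fun a _ => ?_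
        ring
      rw [this]
      refine (Finset.abs_sum_le_sum_abs _ _).trans ?_
      refine Finset.sum_le_sum fun a _ => ?_
      rw [abs_mul, abs_of_nonneg (hP0 j a s)]
    calc (∑ s, |M' s j - M s j|) ≤ ∑ s, ∑ a, P j a s * |pol' j a - pol j a| :=
          Finset.sum_le_sum fun s _ => this s
      _ = ∑ a, (∑ s, P j a s) * |pol' j a - pol j a| := by
          rw [Finset.sum_comm]
          exact Finset.sum_congr rfl fun a _ => (Finset.sum_mul ..).symm
      _ = ∑ a, |pol' j a - pol j a| := by simp [hP1]
      _ = 2 * DTV pol' pol j := by rw [DTV]; ring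
  -- main chain
  have hmain : (∑ s, |D' s - D s|)
      ≤ γ * (∑ s, |D' s - D s|) + γ * ∑ j, D j * (2 * DTV pol' pol j) := by
    calc (∑ s, |D' s - D s|)
        ≤ ∑ s, γ * ((∑ j, M' s j * |D' j - D j|) + ∑ j, |M' s j - M s j| * D j) := by
          refine Finset.sum_le_sum fun s _ => ?_
          rw [hdelta s, abs_mul, abs_of_nonneg hγ0]
          refine mul_le_mul_of_nonneg_left ?_ hγ0
          refine (abs_add_le _ _).trans (add_le_add ?_ ?_)
          · refine (Finset.abs_sum_le_sum_abs _ _).trans ?_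
            refine Finset.sum_le_sum fun j _ => ?_
            rw [abs_mul, abs_of_nonneg (hM'0 s j)]
          · refine (Finset.abs_sum_le_sum_abs _ _).trans ?_
            refine Finset.sum_le_sum fun j _ => ?_
            rw [abs_mul, abs_of_nonneg (hDnn j)]
      _ = γ * (∑ s, ∑ j, M' s j * |D' j - D j|)
          + γ * (∑ s, ∑ j, |M' s j - M s j| * D j) := by
          rw [Finset.mul_sum, Finset.mul_sum, ← Finset.sum_add_distrib]
          exact Finset.sum_congr rfl fun s _ => mul_add γ _ _
      _ = γ * (∑ j, (∑ s, M' s j) * |D' j - D j|)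
          + γ * ∑ j, (∑ s, |M' s j - M s j|) * D j := by
          congr 1
          · rw [Finset.sum_comm]
            congr 1
            exact Finset.sum_congr rfl fun j _ => (Finset.sum_mul ..).symm
          · rw [Finset.sum_comm]
            congr 1
            exact Finset.sum_congr rfl fun j _ => (Finset.sum_mul ..).symm
      _ ≤ γ * (∑ s, |D' s - D s|) + γ * ∑ j, D j * (2 * DTV pol' pol j) := by
          refine add_le_add ?_ ?_
          · refine mul_le_mul_of_nonneg_left ?_ hγ0
            simp only [hM'def, hM'1, one_mul]
            exact le_refl _
          · refine mul_le_mul_of_nonneg_left ?_ hγ0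
            refine Finset.sum_le_sum fun j _ => ?_
            rw [mul_comm (D j)]
            exact mul_le_mul_of_nonneg_right (hcol j) (hDnn j)
  have h1γ : (0:ℝ) < 1 - γ := by linarith
  have : (1 - γ) * (∑ s, |D' s - D s|) ≤ γ * ∑ j, D j * (2 * DTV pol' pol j) := by
    nlinarith [hmain]
  rw [div_mul_eq_mul_div, le_div_iff₀ h1γ]
  calc (∑ s, |D' s - D s|) * (1 - γ)
      = (1 - γ) * (∑ s, |D' s - D s|) := by ring
    _ ≤ γ * ∑ j, D j * (2 * DTV pol' pol j) := this
    _ = 2 * γ * ∑ s, D s * DTV pol' pol s := by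
        rw [Finset.mul_sum, Finset.mul_sum]
        refine Finset.sum_congr rfl fun j _ => ?_
        ring
end
end

section
/- (Performance difference identity.) For any two policies π' and π, J(π') - J(π) = (1/(1-γ)) E_{s∼d^{π'}, a∼π'(·|s)}[A^π(s,a)]. -/
open BigOperators Finset Matrix

noncomputable section

variable {S A : Type*}

section Helpers
variable [Fintype S] [DecidableEq S] [Fintype A]

lemma iter_prop (P : S → A → S → ℝ) (hP0 : ∀ s a s', 0 ≤ P s a s')
    (hP1 : ∀ s a, (∑ s', P s a s') = 1)
    (μ : S → ℝ) (hμ0 : ∀ s, 0 ≤ μ s) (hμ1 : (∑ s, μ s) = 1)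
    (pol : S → A → ℝ) (hq0 : ∀ s a, 0 ≤ pol s a) (hq1 : ∀ s, (∑ a, pol s a) = 1) :
    ∀ t : ℕ, (∀ s, 0 ≤ ((Pmat P pol ^ t) *ᵥ μ) s) ∧ (∑ s, ((Pmat P pol ^ t) *ᵥ μ) s) = 1 := by
  intro t
  induction t with
  | zero => simpa using ⟨hμ0, hμ1⟩
  | succ t ih =>
    have hstep : (Pmat P pol ^ (t+1)) *ᵥ μ = Pmat P pol *ᵥ ((Pmat P pol ^ t) *ᵥ μ) := by
      rw [pow_succ', Matrix.mulVec_mulVec]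
    rw [hstep]
    constructor
    · intro s
      simp only [Matrix.mulVec, dotProduct]
      apply Finset.sum_nonneg
      intro j _
      exact mul_nonneg (Finset.sum_nonneg fun a _ => mul_nonneg (hP0 _ _ _) (hq0 _ _)) (ih.1 j)
    · simp only [Matrix.mulVec, dotProduct]
      rw [Finset.sum_comm]
      rw [← ih.2]
      apply Finset.sum_congr rfl
      intro j _
      rw [← Finset.sum_mul]
      have h1 : ∑ s', Pmat P pol s' j = 1 := by
        simp only [Pmat]
        rw [Finset.sum_comm]
        simp_rw [← Finset.sum_mul, hP1, one_mul]
        exact hq1 j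
      rw [h1, one_mul]
      simp [Matrix.mulVec, dotProduct]

lemma summable_aux {γ : ℝ} (hγ0 : 0 ≤ γ) (hγ1 : γ < 1)
    (P : S → A → S → ℝ) (hP0 : ∀ s a s', 0 ≤ P s a s')
    (hP1 : ∀ s a, (∑ s', P s a s') = 1)
    (μ : S → ℝ) (hμ0 : ∀ s, 0 ≤ μ s) (hμ1 : (∑ s, μ s) = 1)
    (pol : S → A → ℝ) (hq0 : ∀ s a, 0 ≤ pol s a) (hq1 : ∀ s, (∑ a, pol s a) = 1) (s : S) :
    Summable (fun t : ℕ => γ ^ t * ((Pmat P pol ^ t) *ᵥ μ) s) := by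
  refine Summable.of_nonneg_of_le (fun t => ?_) (fun t => ?_)
    (summable_geometric_of_lt_one hγ0 hγ1)
  · exact mul_nonneg (pow_nonneg hγ0 t) ((iter_prop P hP0 hP1 μ hμ0 hμ1 pol hq0 hq1 t).1 s)
  · have h := iter_prop P hP0 hP1 μ hμ0 hμ1 pol hq0 hq1 t
    have hle : ((Pmat P pol ^ t) *ᵥ μ) s ≤ 1 := by
      rw [← h.2]
      exact Finset.single_le_sum (fun i _ => h.1 i) (Finset.mem_univ s)
    calc γ ^ t * ((Pmat P pol ^ t) *ᵥ μ) s ≤ γ ^ t * 1 :=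
          mul_le_mul_of_nonneg_left hle (pow_nonneg hγ0 t)
      _ = γ ^ t := mul_one _

lemma dFut_rec {γ : ℝ} (hγ0 : 0 ≤ γ) (hγ1 : γ < 1)
    (P : S → A → S → ℝ) (hP0 : ∀ s a s', 0 ≤ P s a s')
    (hP1 : ∀ s a, (∑ s', P s a s') = 1)
    (μ : S → ℝ) (hμ0 : ∀ s, 0 ≤ μ s) (hμ1 : (∑ s, μ s) = 1)
    (pol : S → A → ℝ) (hq0 : ∀ s a, 0 ≤ pol s a) (hq1 : ∀ s, (∑ a, pol s a) = 1) (s' : S) :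
    γ * ∑ s, Pmat P pol s' s * dFut γ P μ pol s
      = dFut γ P μ pol s' - (1 - γ) * μ s' := by
  have hsum := summable_aux hγ0 hγ1 P hP0 hP1 μ hμ0 hμ1 pol hq0 hq1
  have key : ∑ s, Pmat P pol s' s * dFut γ P μ pol s
      = (1 - γ) * ∑' t : ℕ, γ ^ t * ((Pmat P pol ^ (t+1)) *ᵥ μ) s' := by
    simp only [dFut]
    have h1 : ∀ s, Pmat P pol s' s * ((1 - γ) * ∑' t : ℕ, γ ^ t * ((Pmat P pol ^ t) *ᵥ μ) s)
        = (1 - γ) * ∑' t : ℕ, γ ^ t * (Pmat P pol s' s * ((Pmat P pol ^ t) *ᵥ μ) s) := by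
      intro s
      have e : ∑' t : ℕ, γ ^ t * (Pmat P pol s' s * ((Pmat P pol ^ t) *ᵥ μ) s)
          = Pmat P pol s' s * ∑' t : ℕ, γ ^ t * ((Pmat P pol ^ t) *ᵥ μ) s := by
        rw [← tsum_mul_left]
        congr 1; funext t; ring
      rw [e]; ring
    simp_rw [h1]
    rw [← Finset.mul_sum]
    congr 1
    rw [← Summable.tsum_finsetSum (f := fun s t => γ ^ t * (Pmat P pol s' s * ((Pmat P pol ^ t) *ᵥ μ) s))]
    · congr 1; funext t
      rw [← Finset.mul_sum]
      congr 1
      have hstep : (Pmat P pol ^ (t+1)) *ᵥ μ = Pmat P pol *ᵥ ((Pmat P pol ^ t) *ᵥ μ) := by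
        rw [pow_succ', Matrix.mulVec_mulVec]
      rw [hstep]
      simp [Matrix.mulVec, dotProduct]
    · intro s _
      have e : (fun t : ℕ => γ ^ t * (Pmat P pol s' s * ((Pmat P pol ^ t) *ᵥ μ) s))
          = fun t : ℕ => Pmat P pol s' s * (γ ^ t * ((Pmat P pol ^ t) *ᵥ μ) s) := by
        funext t; ring
      rw [e]
      exact (hsum s).mul_left _
  rw [key]
  have hz : dFut γ P μ pol s' = (1 - γ) * (μ s' + ∑' t : ℕ, γ ^ (t+1) * ((Pmat P pol ^ (t+1)) *ᵥ μ) s') := by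
    simp only [dFut]
    congr 1
    rw [Summable.tsum_eq_zero_add (hsum s')]
    simp
  rw [hz]
  have e : ∑' t : ℕ, γ ^ (t+1) * ((Pmat P pol ^ (t+1)) *ᵥ μ) s'
      = γ * ∑' t : ℕ, γ ^ t * ((Pmat P pol ^ (t+1)) *ᵥ μ) s' := by
    rw [← tsum_mul_left]
    congr 1; funext t; ring
  rw [e]; ring

lemma expand_lemma (γ : ℝ) (P : S → A → S → ℝ) (R : S → A → S → ℝ) (V : S → ℝ)
    (q : S → A → ℝ) (s : S) :
    ∑ a, q s a * (∑ s', P s a s' * (R s a s' + γ * V s'))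
      = (∑ a, q s a * (∑ s', P s a s' * R s a s')) + γ * ∑ s', Pmat P q s' s * V s' := by
  have h : γ * ∑ s', Pmat P q s' s * V s' = ∑ a, ∑ s', q s a * (P s a s' * (γ * V s')) := by
    simp only [Pmat, Finset.sum_mul, Finset.mul_sum]
    rw [Finset.sum_comm]
    exact Finset.sum_congr rfl fun a _ => Finset.sum_congr rfl fun s'' _ => by ring
  rw [h]
  simp only [Finset.mul_sum, ← Finset.sum_add_distrib]
  exact Finset.sum_congr rfl fun a _ => Finset.sum_congr rfl fun s'' _ => by ring

end Helpers

/-- **Performance difference identity** (Kakade & Langford):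
`J(π') - J(π) = (1/(1-γ)) E_{s∼d^{π'}, a∼π'}[A^π(s,a)]`. -/
theorem performance_difference_identity
    [Fintype S] [DecidableEq S] [Nonempty S] [Fintype A] [Nonempty A]
    (γ : ℝ) (hγ0 : 0 ≤ γ) (hγ1 : γ < 1)
    (P : S → A → S → ℝ) (hP0 : ∀ s a s', 0 ≤ P s a s')
    (hP1 : ∀ s a, (∑ s', P s a s') = 1)
    (μ : S → ℝ) (hμ0 : ∀ s, 0 ≤ μ s) (hμ1 : (∑ s, μ s) = 1)
    (R : S → A → S → ℝ)
    (pol pol' : S → A → ℝ)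
    (hpol0 : ∀ s a, 0 ≤ pol s a) (hpol1 : ∀ s, (∑ a, pol s a) = 1)
    (hpol'0 : ∀ s a, 0 ≤ pol' s a) (hpol'1 : ∀ s, (∑ a, pol' s a) = 1)
    (V : S → ℝ)
    (hV : ∀ s, V s = ∑ a, pol s a * (∑ s', P s a s' * (R s a s' + γ * V s'))) :
    Jret γ P R μ pol' - Jret γ P R μ pol
      = (1 / (1 - γ)) * ∑ s, dFut γ P μ pol' s * (∑ a, pol' s a * Adv γ P R V s a) := by
  have h1γ : (1:ℝ) - γ ≠ 0 := by
    have : (0:ℝ) < 1 - γ := by linarith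
    linarith
  have hmid : ∀ (q : S → A → ℝ), (∀ s a, 0 ≤ q s a) → (∀ s, (∑ a, q s a) = 1) →
      ∑ s, dFut γ P μ q s * (γ * ∑ s', Pmat P q s' s * V s')
        = (∑ s, V s * dFut γ P μ q s) - (1 - γ) * ∑ s, V s * μ s := by
    intro q hq0 hq1
    have h1 : ∑ s, dFut γ P μ q s * (γ * ∑ s', Pmat P q s' s * V s')
        = ∑ s', V s' * (γ * ∑ s, Pmat P q s' s * dFut γ P μ q s) := by
      simp only [Finset.mul_sum]
      rw [Finset.sum_comm]
      exact Finset.sum_congr rfl fun s' _ => Finset.sum_congr rfl fun s _ => by ring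
    rw [h1]
    have h2 : ∀ s', γ * ∑ s, Pmat P q s' s * dFut γ P μ q s
        = dFut γ P μ q s' - (1 - γ) * μ s' :=
      dFut_rec hγ0 hγ1 P hP0 hP1 μ hμ0 hμ1 q hq0 hq1
    simp_rw [h2, mul_sub]
    rw [Finset.sum_sub_distrib, Finset.mul_sum]
    congr 1
    exact Finset.sum_congr rfl fun s _ => by ring
  have hVr : ∀ s, (∑ a, pol s a * (∑ s', P s a s' * R s a s'))
      = V s - γ * ∑ s', Pmat P pol s' s * V s' := by
    intro s
    have := (hV s).trans (expand_lemma γ P R V pol s)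
    linarith
  -- J(π) = ∑ V μ
  have hJpol : Jret γ P R μ pol = ∑ s, V s * μ s := by
    unfold Jret
    simp_rw [hVr]
    have h3 : ∑ s, dFut γ P μ pol s * (V s - γ * ∑ s', Pmat P pol s' s * V s')
        = (∑ s, V s * dFut γ P μ pol s)
          - ∑ s, dFut γ P μ pol s * (γ * ∑ s', Pmat P pol s' s * V s') := by
      simp only [mul_sub]
      rw [Finset.sum_sub_distrib]
      congr 1
      exact Finset.sum_congr rfl fun s _ => by ring
    rw [h3, hmid pol hpol0 hpol1]
    field_simp
    ring
  have hA : ∀ s, (∑ a, pol' s a * Adv γ P R V s a)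
      = (∑ a, pol' s a * (∑ s', P s a s' * R s a s'))
        + γ * (∑ s', Pmat P pol' s' s * V s') - V s := by
    intro s
    simp only [Adv, mul_sub]
    rw [Finset.sum_sub_distrib, ← Finset.sum_mul, hpol'1 s, one_mul,
      expand_lemma γ P R V pol' s]
  have hsplit : ∑ s, dFut γ P μ pol' s * (∑ a, pol' s a * Adv γ P R V s a)
      = (∑ s, dFut γ P μ pol' s * (∑ a, pol' s a * (∑ s', P s a s' * R s a s')))
        + (∑ s, dFut γ P μ pol' s * (γ * ∑ s', Pmat P pol' s' s * V s'))
        - ∑ s, V s * dFut γ P μ pol' s := by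
    simp_rw [hA]
    simp only [mul_add, mul_sub]
    rw [Finset.sum_sub_distrib, Finset.sum_add_distrib]
    congr 1
    exact Finset.sum_congr rfl fun s _ => by ring
  rw [hsplit, hmid pol' hpol'0 hpol'1, hJpol]
  unfold Jret
  field_simp
  ring
end
end
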